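/- If E is constant in time and t_m + t_e ≥ δ > 0 on [0,∞), then P(t,x) converges as t → ∞ to a value lying in the closed interval between min(A_E(x), A_P(x)) and max(A_E(x), A_P(x)); in particular dist(P(t,x), [min(A_E,A_P), max(A_E,A_P)]) → 0. -/

import Mathlib

open Filter

/-- Auxiliary: the solution eventually stays below `max A B + ε`. -/
lemma eventually_le_upper (tm te P : ℝ → ℝ) (A B δ ε : ℝ) (hδ : 0 < δ) (hε : 0 < ε)
    (htmnn : ∀ t, 0 ≤ tm t) (htenn : ∀ t, 0 ≤ te t)
    (hsum : ∀ t, δ ≤ tm t + te t)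
    (hP : ∀ t, HasDerivAt P (tm t * (A - P t) + te t * (B - P t)) t) :
    ∃ T, ∀ t ≥ T, P t ≤ max A B + ε := by
  set M := max A B with hM
  have key : ∀ t, M + ε ≤ P t → tm t * (A - P t) + te t * (B - P t) ≤ -(δ * ε) := by
    intro t ht
    have h1 : A - P t ≤ -ε := by have := le_max_left A B; linarith
    have h2 : B - P t ≤ -ε := by have := le_max_right A B; linarith
    have hs := hsum t
    nlinarith [mul_le_mul_of_nonneg_left h1 (htmnn t),
      mul_le_mul_of_nonneg_left h2 (htenn t)]
  have hPd : Differentiable ℝ P := fun t => (hP t).differentiableAt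
  have hPc : Continuous P := hPd.continuous
  have hδε : 0 < δ * ε := mul_pos hδ hε
  -- Step A: at some time, P is below M + ε
  have stepA : ∃ t0, P t0 ≤ M + ε := by
    by_contra h
    push_neg at h
    have hQd : Differentiable ℝ (fun u => P u + δ * ε * u) :=
      hPd.add (differentiable_id.const_mul _)
    have hanti : Antitone (fun u => P u + δ * ε * u) := by
      apply antitone_of_deriv_nonpos hQd
      intro u
      have hd : HasDerivAt (fun u => P u + δ * ε * u)
          (tm u * (A - P u) + te u * (B - P u) + δ * ε) u := by
        exact ((hP u).add ((hasDerivAt_id u).const_mul (δ * ε))).congr_deriv (by ring)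
      rw [hd.deriv]
      have := key u (le_of_lt (h u))
      linarith
    have h0 : 0 < P 0 - M - ε := by have := h 0; linarith
    set t : ℝ := (P 0 - M - ε) / (δ * ε) + 1 with ht
    have htpos : (0:ℝ) ≤ t := by positivity
    have h1 : P t + δ * ε * t ≤ P 0 + δ * ε * 0 := hanti htpos
    have h2 : δ * ε * t = P 0 - M - ε + δ * ε := by
      have hne : δ * ε ≠ 0 := ne_of_gt hδε
      rw [ht, mul_add, mul_div_assoc', mul_comm (δ * ε) (P 0 - M - ε), mul_div_assoc, div_self hne]
      ring
    have := h t
    linarith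
  -- Step B: invariance
  obtain ⟨t0, ht0⟩ := stepA
  refine ⟨t0, fun t1 ht1 => ?_⟩
  by_contra hcon
  push_neg at hcon
  set S : Set ℝ := Set.Icc t0 t1 ∩ P ⁻¹' Set.Iic (M + ε) with hS
  have hSne : S.Nonempty := ⟨t0, ⟨le_refl _, ht1⟩, ht0⟩
  have hScl : IsClosed S := (isClosed_Icc).inter (isClosed_Iic.preimage hPc)
  have hScomp : IsCompact S :=
    (isCompact_Icc).of_isClosed_subset hScl Set.inter_subset_left
  have hsmem : sSup S ∈ S := hScomp.sSup_mem hSne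
  set s := sSup S with hs
  have hst1 : s ≤ t1 := hsmem.1.2
  have hsne : s ≠ t1 := by
    intro hcontra
    have := hsmem.2
    rw [hcontra] at this
    exact absurd this (not_le.mpr hcon)
  have hslt : s < t1 := lt_of_le_of_ne hst1 hsne
  have habove : ∀ u ∈ Set.Ioo s t1, M + ε < P u := by
    intro u hu
    by_contra hle
    push_neg at hle
    have huS : u ∈ S := ⟨⟨le_trans hsmem.1.1 hu.1.le, hu.2.le⟩, hle⟩
    have : u ≤ s := le_csSup hScomp.bddAbove huS
    exact absurd this (not_le.mpr hu.1)
  have hanti : StrictAntiOn P (Set.Icc s t1) := by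
    apply strictAntiOn_of_deriv_neg (convex_Icc s t1) hPc.continuousOn
    intro u hu
    rw [interior_Icc] at hu
    rw [(hP u).deriv]
    have := key u (le_of_lt (habove u hu))
    linarith
  have : P t1 < P s :=
    hanti (Set.left_mem_Icc.mpr hslt.le) (Set.right_mem_Icc.mpr hslt.le) hslt
  have := hsmem.2
  simp only [Set.mem_preimage, Set.mem_Iic] at this
  linarith [hcon]

/-- With `E` constant in time and `t_m + t_e ≥ δ > 0`, the distance from `P(t)`
to the closed interval between the two attractor values tends to `0`. -/
theorem population_attracted_to_interval
    (tm te P : ℝ → ℝ) (AE AP δ : ℝ) (hδ : 0 < δ)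
    (htm : Continuous tm) (hte : Continuous te)
    (htmnn : ∀ t, 0 ≤ tm t) (htenn : ∀ t, 0 ≤ te t)
    (hsum : ∀ t, δ ≤ tm t + te t)
    (hP : ∀ t, HasDerivAt P (tm t * (AE - P t) + te t * (AP - P t)) t) :
    Tendsto (fun t => Metric.infDist (P t) (Set.Icc (min AE AP) (max AE AP)))
      atTop (nhds 0) := by
  rw [Metric.tendsto_atTop]
  intro ε hε
  have hε2 : 0 < ε / 2 := by positivity
  obtain ⟨T1, h1⟩ := eventually_le_upper tm te P AE AP δ (ε / 2) hδ hε2 htmnn htenn hsum hP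
  have hPneg : ∀ t, HasDerivAt (fun u => -P u)
      (tm t * (-AE - -P t) + te t * (-AP - -P t)) t := by
    intro t
    have := (hP t).neg
    exact this.congr_deriv (by ring)
  obtain ⟨T2, h2⟩ := eventually_le_upper tm te (fun u => -P u) (-AE) (-AP) δ (ε / 2)
    hδ hε2 htmnn htenn hsum hPneg
  refine ⟨max T1 T2, fun t ht => ?_⟩
  set m := min AE AP with hm
  set M := max AE AP with hMM
  have hub : P t ≤ M + ε / 2 := h1 t (le_trans (le_max_left _ _) ht)
  have hlb : m - ε / 2 ≤ P t := by
    have := h2 t (le_trans (le_max_right _ _) ht)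
    have hmax : max (-AE) (-AP) = -m := by rw [hm, max_neg_neg]
    rw [hmax] at this
    linarith
  have hmM : m ≤ M := min_le_max
  set y : ℝ := max m (min (P t) M) with hy
  have hyI : y ∈ Set.Icc m M := by
    constructor
    · exact le_max_left _ _
    · exact max_le hmM (le_trans (min_le_right _ _) (le_refl _))
  have hdist : dist (P t) y ≤ ε / 2 := by
    rw [Real.dist_eq, abs_le]
    rcases le_total (P t) M with h | h <;> rcases le_total m (P t) with h' | h'
    · rw [hy, min_eq_left h, max_eq_right h']
      constructor <;> linarith
    · rw [hy, min_eq_left h, max_eq_left h']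
      constructor <;> linarith
    · rw [hy, min_eq_right h, max_eq_right hmM]
      constructor <;> linarith
    · rw [hy, min_eq_right h, max_eq_right hmM]
      constructor <;> linarith
  have hinf : Metric.infDist (P t) (Set.Icc m M) ≤ ε / 2 :=
    le_trans (Metric.infDist_le_dist_of_mem hyI) hdist
  have hnn : 0 ≤ Metric.infDist (P t) (Set.Icc m M) := Metric.infDist_nonneg
  rw [Real.dist_eq, abs_sub_comm, abs_of_nonpos (by linarith)]
  linarith
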